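/- Fix μ̃ > 0, σ > 0, θ̃ ∈ ℝ, S₀ > 0 and T > 0, and define the XOU futures curve f(T) := exp( e^{−μ̃T}·ln S₀ + (1 − e^{−μ̃T})(θ̃ − σ²/(2μ̃)) + (σ²/(4μ̃))(1 − e^{−2μ̃T}) ). If θ̃ − (σ²/(2μ̃))(1 − e^{−μ̃T}) − ( e^{2μ̃T}/4 + σ²/(2μ̃) )^{1/2} − e^{μ̃T}/2 < ln S₀ < θ̃ − (σ²/(2μ̃))(1 − e^{−μ̃T}), then the first derivative of f at T is strictly positive and the second derivative of f at T is strictly negative (the futures curve is upward-sloping and concave at T). -/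

import Mathlib

open Real

private lemma hasDerivAt_G (μ L A B : ℝ) (t : ℝ) :
    HasDerivAt (fun x : ℝ => exp (-μ * x) * L + (1 - exp (-μ * x)) * A + B * (1 - exp (-2 * μ * x)))
      (μ * exp (-μ * t) * (A - L) + 2 * μ * B * exp (-2 * μ * t)) t := by
  have h1 : HasDerivAt (fun x : ℝ => -μ * x) (-μ) t := by
    simpa using (hasDerivAt_id t).const_mul (-μ)
  have h2 : HasDerivAt (fun x : ℝ => -2 * μ * x) (-2 * μ) t := by
    simpa using (hasDerivAt_id t).const_mul (-2 * μ)
  have he1 : HasDerivAt (fun x : ℝ => exp (-μ * x)) (exp (-μ * t) * -μ) t := h1.exp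
  have he2 : HasDerivAt (fun x : ℝ => exp (-2 * μ * x)) (exp (-2 * μ * t) * (-2 * μ)) t := h2.exp
  have h := ((he1.mul_const L).add (((hasDerivAt_const t (1:ℝ)).sub he1).mul_const A)).add
    (((hasDerivAt_const t (1:ℝ)).sub he2).const_mul B)
  refine HasDerivAt.congr_deriv h ?_
  ring

private lemma hasDerivAt_D (μ L A B : ℝ) (t : ℝ) :
    HasDerivAt (fun x : ℝ => μ * exp (-μ * x) * (A - L) + 2 * μ * B * exp (-2 * μ * x))
      (-(μ^2) * exp (-μ * t) * (A - L) - 4 * μ^2 * B * exp (-2 * μ * t)) t := by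
  have h1 : HasDerivAt (fun x : ℝ => -μ * x) (-μ) t := by
    simpa using (hasDerivAt_id t).const_mul (-μ)
  have h2 : HasDerivAt (fun x : ℝ => -2 * μ * x) (-2 * μ) t := by
    simpa using (hasDerivAt_id t).const_mul (-2 * μ)
  have he1 : HasDerivAt (fun x : ℝ => exp (-μ * x)) (exp (-μ * t) * -μ) t := h1.exp
  have he2 : HasDerivAt (fun x : ℝ => exp (-2 * μ * x)) (exp (-2 * μ * t) * (-2 * μ)) t := h2.exp
  have h := (((he1.const_mul μ).mul_const (A - L)).add (he2.const_mul (2 * μ * B)))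
  refine HasDerivAt.congr_deriv h ?_
  ring

set_option maxHeartbeats 1000000 in
/-- XOU futures term structure: upward-sloping and concave in the middle-lower band. -/
theorem xou_term_structure_up_concave (μt θt σ S0 T : ℝ) (hμ : 0 < μt) (hσ : 0 < σ) (hS : 0 < S0)
    (hT : 0 < T) (f : ℝ → ℝ)
    (hf : f = fun T : ℝ => exp (exp (-μt * T) * log S0
      + (1 - exp (-μt * T)) * (θt - σ ^ 2 / (2 * μt))
      + σ ^ 2 / (4 * μt) * (1 - exp (-2 * μt * T))))
    (hln1 : θt - σ ^ 2 / (2 * μt) * (1 - exp (-μt * T)) - Real.sqrt (exp (2 * μt * T) / 4 + σ ^ 2 / (2 * μt)) - exp (μt * T) / 2 < log S0) (hln2 : log S0 < θt - σ ^ 2 / (2 * μt) * (1 - exp (-μt * T))) :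
    0 < deriv f T ∧ deriv (deriv f) T < 0 := by
  have hμ0 : μt ≠ 0 := ne_of_gt hμ
  obtain ⟨L, hLdef⟩ : ∃ L, log S0 = L := ⟨_, rfl⟩
  obtain ⟨A, hAdef⟩ : ∃ A, θt - σ ^ 2 / (2 * μt) = A := ⟨_, rfl⟩
  obtain ⟨B, hBdef⟩ : ∃ B, σ ^ 2 / (4 * μt) = B := ⟨_, rfl⟩
  obtain ⟨G, hGdef⟩ : ∃ G : ℝ → ℝ, (fun x : ℝ => exp (-μt * x) * L + (1 - exp (-μt * x)) * A
      + B * (1 - exp (-2 * μt * x))) = G := ⟨_, rfl⟩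
  obtain ⟨D, hDdef⟩ : ∃ D : ℝ → ℝ, (fun x : ℝ => μt * exp (-μt * x) * (A - L)
      + 2 * μt * B * exp (-2 * μt * x)) = D := ⟨_, rfl⟩
  have hfG : f = fun x : ℝ => exp (G x) := by
    rw [hf, ← hGdef, hLdef, hAdef, hBdef]
  have hG : ∀ x, HasDerivAt G (D x) x := by
    intro x
    rw [← hGdef, ← hDdef]
    exact hasDerivAt_G μt L A B x
  have hD : ∀ x, HasDerivAt D (-(μt^2) * exp (-μt * x) * (A - L) - 4 * μt^2 * B * exp (-2 * μt * x)) x := by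
    intro x
    rw [← hDdef]
    exact hasDerivAt_D μt L A B x
  have hf1 : ∀ x, HasDerivAt f (exp (G x) * D x) x := fun x => by
    rw [hfG]; exact (hG x).exp
  have hderiv1 : deriv f = fun x => exp (G x) * D x := funext fun x => (hf1 x).deriv
  have hf2 : HasDerivAt (fun x => exp (G x) * D x)
      (exp (G T) * D T * D T + exp (G T) * (-(μt^2) * exp (-μt * T) * (A - L) - 4 * μt^2 * B * exp (-2 * μt * T))) T :=
    ((hG T).exp.mul (hD T))
  have hderiv2 : deriv (deriv f) T
      = exp (G T) * D T * D T + exp (G T) * (-(μt^2) * exp (-μt * T) * (A - L) - 4 * μt^2 * B * exp (-2 * μt * T)) := by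
    rw [hderiv1]; exact hf2.deriv
  have hDTexp : D T = μt * exp (-μt * T) * (A - L) + 2 * μt * B * exp (-2 * μt * T) :=
    (congrFun hDdef T).symm
  -- abbreviations
  obtain ⟨e, hedef⟩ : ∃ e, exp (-μt * T) = e := ⟨_, rfl⟩
  obtain ⟨E, hEdef⟩ : ∃ E, exp (μt * T) = E := ⟨_, rfl⟩
  obtain ⟨s, hsdef⟩ : ∃ s, Real.sqrt (exp (2 * μt * T) / 4 + σ ^ 2 / (2 * μt)) = s := ⟨_, rfl⟩
  have hepos : 0 < e := hedef ▸ exp_pos _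
  have hEpos : 0 < E := hEdef ▸ exp_pos _
  have hspos : 0 ≤ s := hsdef ▸ Real.sqrt_nonneg _
  have heE : e * E = 1 := by
    rw [← hedef, ← hEdef, ← Real.exp_add]
    have h0 : -μt * T + μt * T = 0 := by ring
    rw [h0, Real.exp_zero]
  have he2 : exp (-2 * μt * T) = e * e := by
    rw [← hedef, ← Real.exp_add]; congr 1; ring
  have hE2 : exp (2 * μt * T) = E * E := by
    rw [← hEdef, ← Real.exp_add]; congr 1; ring
  obtain ⟨w, hwdef⟩ : ∃ w, θt - σ ^ 2 / (2 * μt) * (1 - e) - L = w := ⟨_, rfl⟩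
  rw [hLdef, hedef, hsdef, hEdef] at hln1
  rw [hLdef, hedef] at hln2
  have hwpos : 0 < w := by rw [← hwdef]; linarith
  have hws : w < s + E / 2 := by rw [← hwdef]; linarith
  have hs2 : s ^ 2 = E * E / 4 + σ ^ 2 / (2 * μt) := by
    rw [← hsdef, Real.sq_sqrt (by positivity), hE2]
  have hsE : E / 2 ≤ s := by
    have harg : (E/2)^2 ≤ exp (2 * μt * T) / 4 + σ ^ 2 / (2 * μt) := by
      rw [hE2]
      have h0 : (0:ℝ) ≤ σ ^ 2 / (2 * μt) := by positivity
      have h1 : (E/2)^2 = E * E / 4 := by ring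
      linarith
    calc E / 2 = Real.sqrt ((E/2)^2) := (Real.sqrt_sq (by positivity)).symm
      _ ≤ s := by rw [← hsdef]; exact Real.sqrt_le_sqrt harg
  -- key quadratic inequality
  have hup : w - E / 2 < s := by linarith
  have hlo : -s < w - E / 2 := by linarith
  have hsq : (w - E/2)^2 < s^2 := sq_lt_sq' hlo hup
  have hkey : w ^ 2 < E * w + σ ^ 2 / (2 * μt) := by
    rw [hs2] at hsq
    have hexp : (w - E/2)^2 = w^2 - E*w + E*E/4 := by ring
    linarith
  -- identities
  have hDT : D T = μt * e * w := by
    rw [hDTexp, hedef, he2, ← hwdef, ← hAdef, ← hBdef, ← hLdef]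
    field_simp
    ring
  have hD'T : -(μt^2) * exp (-μt * T) * (A - L) - 4 * μt^2 * B * exp (-2 * μt * T)
      = -(μt * e * (μt * w + σ ^ 2 / 2 * e)) := by
    rw [hedef, he2, ← hwdef, ← hAdef, ← hBdef, ← hLdef]
    field_simp
    ring
  constructor
  · rw [hderiv1]
    show 0 < exp (G T) * D T
    rw [hDT]
    positivity
  · rw [hderiv2, hDT, hD'T]
    have hchain : e * w ^ 2 < w + σ ^ 2 / (2 * μt) * e := by
      have hmul : e * w ^ 2 < e * (E * w + σ ^ 2 / (2 * μt)) :=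
        mul_lt_mul_of_pos_left hkey hepos
      have hid : e * (E * w + σ ^ 2 / (2 * μt)) = (e * E) * w + σ ^ 2 / (2 * μt) * e := by ring
      rw [hid, heE, one_mul] at hmul
      exact hmul
    have h6 : μt * (w + σ ^ 2 / (2 * μt) * e) = μt * w + σ ^ 2 / 2 * e := by
      field_simp
    have h5 : μt * (e * w ^ 2) < μt * w + σ ^ 2 / 2 * e := by
      have h7 := mul_lt_mul_of_pos_left hchain hμ
      rw [h6] at h7
      exact h7
    have hneg : μt * (e * w ^ 2) - (μt * w + σ ^ 2 / 2 * e) < 0 := by linarith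
    have hfact : exp (G T) * (μt * e * w) * (μt * e * w) + exp (G T) * (-(μt * e * (μt * w + σ ^ 2 / 2 * e)))
        = exp (G T) * ((μt * e) * (μt * (e * w ^ 2) - (μt * w + σ ^ 2 / 2 * e))) := by ring
    rw [hfact]
    exact mul_neg_of_pos_of_neg (exp_pos _) (mul_neg_of_pos_of_neg (mul_pos hμ hepos) hneg)
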